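/- Let $X_1,\dots,X_n$, $Z_1,\dots,Z_n$ be random variables and $E_1,\dots,E_n$ be Bernoulli random variables, and define $Y_i = E_i X_i + (1-E_i) Z_i$ for all $i$. If $E_1,\dots,E_n$, $Z_1,\dots,Z_n$ and $\mathbf{X}=(X_1,\dots,X_n)$ are mutually independent, then $\mathbf{K}\big(\mathcal{L}(\mathbf{Y})\,\big\|\,\mathcal{L}(Y_1)\otimes\cdots\otimes\mathcal{L}(Y_n)\big) \le \mathbf{K}\big(\mathcal{L}(\mathbf{X})\,\big\|\,\mathcal{L}(X_1)\otimes\cdots\otimes\mathcal{L}(X_n)\big)$. -/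

import Mathlib

open MeasureTheory ProbabilityTheory
open scoped ENNReal NNReal

/- The Kullback-Leibler divergence, valued in `ℝ≥0∞` (appropriate for probability measures). -/
open Classical in
noncomputable def klDiv {α : Type*} [MeasurableSpace α] (μ ν : Measure α) : ℝ≥0∞ :=
  if μ ≪ ν ∧ Integrable (llr μ ν) μ then ENNReal.ofReal (∫ x, llr μ ν x ∂μ) else ⊤

/-- Index type for the mutual independence of `E_1, …, E_n, Z_1, …, Z_n` and the vector `X`. -/
def contType (n : ℕ) : (Fin n ⊕ Fin n) ⊕ Unit → Type :=
  fun k => match k with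
  | .inl _ => ℝ
  | .inr _ => Fin n → ℝ

instance contTypeMeasurableSpace (n : ℕ) (k : (Fin n ⊕ Fin n) ⊕ Unit) :
    MeasurableSpace (contType n k) := by
  cases k with
  | inl _ => exact (inferInstance : MeasurableSpace ℝ)
  | inr _ => exact (inferInstance : MeasurableSpace (Fin n → ℝ))

open Real

section Analytic
variable {α : Type*} [MeasurableSpace α] {μ ν : Measure α}

lemma my_integrable_of_bounded [IsFiniteMeasure μ] {f : α → ℝ} {C : ℝ}
    (hf : AEStronglyMeasurable f μ) (h : ∀ x, |f x| ≤ C) : Integrable f μ :=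
  ⟨hf, HasFiniteIntegral.of_bounded (C := C) (Filter.Eventually.of_forall h)⟩

lemma my_exp_integral_le [IsProbabilityMeasure μ] {f : α → ℝ} (hf : Integrable f μ)
    (hf2 : Integrable (fun x => exp (f x)) μ) :
    exp (∫ x, f x ∂μ) ≤ ∫ x, exp (f x) ∂μ :=
  convexOn_exp.map_integral_le continuous_exp.continuousOn isClosed_univ
    (Filter.Eventually.of_forall fun _ => Set.mem_univ _) hf hf2

lemma my_integral_llr_nonneg [IsProbabilityMeasure μ] [IsProbabilityMeasure ν]
    (hμν : μ ≪ ν) (h_int : Integrable (llr μ ν) μ) : 0 ≤ ∫ x, llr μ ν x ∂μ := by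
  have hmeas : Measurable (llr μ ν) := measurable_llr μ ν
  have hlint : ∫⁻ x, ENNReal.ofReal (exp (-(llr μ ν x))) ∂μ ≤ 1 := by
    rw [← lintegral_rnDeriv_mul hμν (show Measurable (fun x => ENNReal.ofReal (exp (-(llr μ ν x)))) from ((measurable_llr μ ν).neg.exp).ennreal_ofReal).aemeasurable]
    calc ∫⁻ x, μ.rnDeriv ν x * ENNReal.ofReal (exp (-(llr μ ν x))) ∂ν
        ≤ ∫⁻ _, 1 ∂ν := by
          refine lintegral_mono_ae ?_
          filter_upwards [Measure.rnDeriv_lt_top μ ν] with x hx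
          rcases eq_or_ne (μ.rnDeriv ν x) 0 with h0 | h0
          · simp [h0]
          · have hpos : 0 < (μ.rnDeriv ν x).toReal := ENNReal.toReal_pos h0 hx.ne
            calc μ.rnDeriv ν x * ENNReal.ofReal (exp (-(llr μ ν x)))
                = ENNReal.ofReal ((μ.rnDeriv ν x).toReal) *
                    ENNReal.ofReal (((μ.rnDeriv ν x).toReal)⁻¹) := by
                  rw [show llr μ ν x = Real.log (μ.rnDeriv ν x).toReal from rfl,
                    exp_neg, exp_log hpos, ENNReal.ofReal_toReal hx.ne]
              _ = ENNReal.ofReal ((μ.rnDeriv ν x).toReal * ((μ.rnDeriv ν x).toReal)⁻¹) :=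
                  (ENNReal.ofReal_mul hpos.le).symm
              _ = 1 := by rw [mul_inv_cancel₀ hpos.ne']; simp
              _ ≤ 1 := le_refl _
      _ = 1 := by simp
  have hexp : Integrable (fun x => exp (-(llr μ ν x))) μ := by
    refine ⟨((measurable_llr μ ν).neg.exp).aestronglyMeasurable, ?_⟩
    rw [hasFiniteIntegral_iff_ofReal (Filter.Eventually.of_forall fun x => (exp_pos _).le)]
    exact lt_of_le_of_lt hlint (by norm_num)
  have hle : ∫ x, exp (-(llr μ ν x)) ∂μ ≤ 1 := by
    rw [integral_eq_lintegral_of_nonneg_ae (Filter.Eventually.of_forall fun x => (exp_pos _).le)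
      (show Measurable (fun x => exp (-(llr μ ν x))) from (measurable_llr μ ν).neg.exp).aestronglyMeasurable]
    calc (∫⁻ x, ENNReal.ofReal (exp (-(llr μ ν x))) ∂μ).toReal ≤ (1 : ℝ≥0∞).toReal :=
          ENNReal.toReal_mono (by norm_num) hlint
      _ = 1 := by simp
  have hj := my_exp_integral_le h_int.neg hexp
  have : exp (∫ x, -(llr μ ν x) ∂μ) ≤ 1 := by
    refine le_trans ?_ hle
    simpa using hj
  rw [integral_neg] at this
  have := exp_le_one_iff.mp this
  linarith

lemma my_lintegral_neg_llr_le_one [IsProbabilityMeasure μ] [IsProbabilityMeasure ν] (hμν : μ ≪ ν) :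
    ∫⁻ x, ENNReal.ofReal (-(llr μ ν x)) ∂μ ≤ 1 := by
  rw [← lintegral_rnDeriv_mul hμν (show Measurable (fun x => ENNReal.ofReal (-(llr μ ν x))) from (measurable_llr μ ν).neg.ennreal_ofReal).aemeasurable]
  calc ∫⁻ x, μ.rnDeriv ν x * ENNReal.ofReal (-(llr μ ν x)) ∂ν
      ≤ ∫⁻ _, 1 ∂ν := by
        refine lintegral_mono_ae ?_
        filter_upwards [Measure.rnDeriv_lt_top μ ν] with x hx
        rcases eq_or_ne (μ.rnDeriv ν x) 0 with h0 | h0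
        · simp [h0]
        · have hpos : 0 < (μ.rnDeriv ν x).toReal := ENNReal.toReal_pos h0 hx.ne
          have hllr : llr μ ν x = Real.log (μ.rnDeriv ν x).toReal := rfl
          rcases le_or_gt 1 ((μ.rnDeriv ν x).toReal) with h1 | h1
          · have hnp : -(llr μ ν x) ≤ 0 := by
              rw [hllr]; simp only [neg_nonpos]; exact Real.log_nonneg h1
            rw [ENNReal.ofReal_of_nonpos hnp]; simp
          · have hlog : -(llr μ ν x) ≤ ((μ.rnDeriv ν x).toReal)⁻¹ - 1 := by
              rw [hllr, ← Real.log_inv]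
              exact Real.log_le_sub_one_of_pos (inv_pos.mpr hpos)
            have hmul : (μ.rnDeriv ν x).toReal * (-(llr μ ν x)) ≤ 1 := by
              calc (μ.rnDeriv ν x).toReal * (-(llr μ ν x))
                  ≤ (μ.rnDeriv ν x).toReal * (((μ.rnDeriv ν x).toReal)⁻¹ - 1) :=
                    mul_le_mul_of_nonneg_left hlog hpos.le
                _ = 1 - (μ.rnDeriv ν x).toReal := by field_simp
                _ ≤ 1 := by linarith
            calc μ.rnDeriv ν x * ENNReal.ofReal (-(llr μ ν x))
                = ENNReal.ofReal ((μ.rnDeriv ν x).toReal) * ENNReal.ofReal (-(llr μ ν x)) := by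
                  rw [ENNReal.ofReal_toReal hx.ne]
              _ ≤ ENNReal.ofReal ((μ.rnDeriv ν x).toReal * (-(llr μ ν x))) :=
                  (ENNReal.ofReal_mul hpos.le).symm.le
              _ ≤ ENNReal.ofReal 1 := ENNReal.ofReal_le_ofReal hmul
              _ = 1 := ENNReal.ofReal_one
    _ = 1 := by simp


lemma my_exp_llr_le (μ ν : Measure α) (x : α) :
    exp (llr μ ν x) ≤ (μ.rnDeriv ν x).toReal + 1 := by
  have ht : 0 ≤ (μ.rnDeriv ν x).toReal := ENNReal.toReal_nonneg
  have hllr : llr μ ν x = Real.log (μ.rnDeriv ν x).toReal := rfl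
  rcases eq_or_lt_of_le ht with h0 | h0
  · rw [hllr, ← h0, Real.log_zero, exp_zero]; linarith
  · rw [hllr, exp_log h0]; linarith

lemma my_exp_max_llr_le (μ ν : Measure α) (x : α) :
    exp (max (llr μ ν x) 0) ≤ (μ.rnDeriv ν x).toReal + 2 := by
  have ht : 0 ≤ (μ.rnDeriv ν x).toReal := ENNReal.toReal_nonneg
  have h1 := my_exp_llr_le μ ν x
  rcases le_total (llr μ ν x) 0 with ha | ha
  · rw [max_eq_right ha, exp_zero]; linarith
  · rw [max_eq_left ha]; linarith

lemma my_dv_upper [IsProbabilityMeasure μ] [IsProbabilityMeasure ν]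
    (hμν : μ ≪ ν) (h_int : Integrable (llr μ ν) μ)
    {g : α → ℝ} (hg : Measurable g) {C : ℝ} (hgb : ∀ x, |g x| ≤ C) :
    ∫ x, g x ∂μ - Real.log (∫ x, exp (g x) ∂ν) ≤ ∫ x, llr μ ν x ∂μ := by
  have hgi : Integrable g μ := my_integrable_of_bounded hg.aestronglyMeasurable hgb
  have hgexpν : Integrable (fun x => exp (g x)) ν := by
    refine my_integrable_of_bounded (hg.exp).aestronglyMeasurable (C := exp C) fun x => ?_
    rw [abs_of_pos (exp_pos _)]
    exact exp_le_exp.mpr (abs_le.mp (hgb x)).2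
  haveI : IsProbabilityMeasure (ν.tilted g) := isProbabilityMeasure_tilted hgexpν
  have hacT : μ ≪ ν.tilted g := hμν.trans (absolutelyContinuous_tilted hgexpν)
  have hint' : Integrable (llr μ (ν.tilted g)) μ :=
    integrable_llr_tilted_right hμν hgi h_int hgexpν
  have h0 : 0 ≤ ∫ x, llr μ (ν.tilted g) x ∂μ := my_integral_llr_nonneg hacT hint'
  rw [integral_llr_tilted_right hμν hgi hgexpν h_int] at h0
  linarith

lemma my_klDiv_le_of_forall_bounded [IsProbabilityMeasure μ] [IsProbabilityMeasure ν] {K : ℝ}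
    (h : ∀ g : α → ℝ, Measurable g → (∃ C, ∀ x, |g x| ≤ C) →
      ∫ x, g x ∂μ - Real.log (∫ x, exp (g x) ∂ν) ≤ K) :
    klDiv μ ν ≤ ENNReal.ofReal K := by
  classical
  -- Step (a): absolute continuity
  have hac : μ ≪ ν := by
    by_contra hc
    have : ¬ ∀ ⦃s : Set α⦄, MeasurableSet s → ν s = 0 → μ s = 0 :=
      fun h' => hc (Measure.AbsolutelyContinuous.mk h')
    push_neg at this
    obtain ⟨t, htm, hνt, hμt⟩ := this
    have hm : 0 < (μ t).toReal := ENNReal.toReal_pos hμt (measure_ne_top μ t)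
    set c := (|K| + 1) / (μ t).toReal with hcdef
    have hc0 : 0 < c := div_pos (by positivity) hm
    set g : α → ℝ := t.indicator fun _ => c with hgdef
    have hgmeas : Measurable g := measurable_const.indicator htm
    have hgb : ∀ x, |g x| ≤ c := by
      intro x
      by_cases hx : x ∈ t <;>
        simp [hgdef, Set.indicator_of_mem, Set.indicator_of_notMem, hx, hc0.le, abs_of_nonneg]
    have h1 := h g hgmeas ⟨c, hgb⟩
    have hint : ∫ x, g x ∂μ = c * (μ t).toReal := by
      rw [hgdef, integral_indicator_const _ htm]; simp [mul_comm, measureReal_def]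
    have hexp : ∫ x, exp (g x) ∂ν = 1 := by
      have hae : (fun x => exp (g x)) =ᵐ[ν] fun _ => 1 := by
        filter_upwards [measure_eq_zero_iff_ae_notMem.mp hνt] with x hx
        simp [hgdef, Set.indicator_of_notMem hx]
      rw [integral_congr_ae hae]; simp
    rw [hint, hexp, Real.log_one, sub_zero, hcdef, div_mul_cancel₀ _ hm.ne'] at h1
    have : K < |K| + 1 := lt_of_le_of_lt (le_abs_self K) (by linarith)
    linarith
  have hmeas : Measurable (llr μ ν) := measurable_llr μ ν
  -- Step (b): integrability of llr
  have hint : Integrable (llr μ ν) μ := by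
    by_contra hni
    have hneg : ∫⁻ x, ENNReal.ofReal (-(llr μ ν x)) ∂μ ≤ 1 := my_lintegral_neg_llr_le_one hac
    have hpos : ∫⁻ x, ENNReal.ofReal (max (llr μ ν x) 0) ∂μ = ⊤ := by
      by_contra hfin
      refine hni ⟨hmeas.aestronglyMeasurable, ?_⟩
      rw [hasFiniteIntegral_iff_norm]
      have hb : ∀ x, ENNReal.ofReal ‖llr μ ν x‖ ≤
          ENNReal.ofReal (max (llr μ ν x) 0) + ENNReal.ofReal (-(llr μ ν x)) := by
        intro x
        rw [Real.norm_eq_abs]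
        rcases le_total (llr μ ν x) 0 with h0 | h0
        · refine le_add_left (ENNReal.ofReal_le_ofReal ?_)
          rw [abs_of_nonpos h0]
        · refine le_add_right (ENNReal.ofReal_le_ofReal ?_)
          rw [abs_of_nonneg h0]; exact le_max_left _ _
      calc ∫⁻ x, ENNReal.ofReal ‖llr μ ν x‖ ∂μ
          ≤ ∫⁻ x, (ENNReal.ofReal (max (llr μ ν x) 0) + ENNReal.ofReal (-(llr μ ν x))) ∂μ :=
            lintegral_mono hb
        _ = ∫⁻ x, ENNReal.ofReal (max (llr μ ν x) 0) ∂μ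
              + ∫⁻ x, ENNReal.ofReal (-(llr μ ν x)) ∂μ :=
            lintegral_add_left ((hmeas.max measurable_const).ennreal_ofReal) _
        _ < ⊤ := ENNReal.add_lt_top.mpr
            ⟨lt_top_iff_ne_top.mpr hfin, lt_of_le_of_lt hneg (by norm_num)⟩
    set gm : ℕ → α → ℝ := fun m x => min (max (llr μ ν x) 0) m with hgmdef
    have hgm_meas : ∀ m : ℕ, Measurable (gm m) :=
      fun m => (hmeas.max measurable_const).min measurable_const
    have hgm_nonneg : ∀ m x, 0 ≤ gm m x := fun m x => le_min (le_max_right _ _) (Nat.cast_nonneg m)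
    have hgm_bdd : ∀ m x, |gm m x| ≤ (m : ℝ) := by
      intro m x
      rw [abs_of_nonneg (hgm_nonneg m x)]
      exact min_le_right _ _
    have hb : ∀ m : ℕ, ∫ x, gm m x ∂μ ≤ K + Real.log 3 := by
      intro m
      have hgme : Integrable (fun x => exp (gm m x)) ν :=
        my_integrable_of_bounded ((hgm_meas m).exp).aestronglyMeasurable (C := exp m)
          (fun x => by rw [abs_of_pos (exp_pos _)]; exact exp_le_exp.mpr (abs_le.mp (hgm_bdd m x)).2)
      have hone : (1:ℝ) ≤ ∫ x, exp (gm m x) ∂ν := by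
        calc (1:ℝ) = ∫ _, (1:ℝ) ∂ν := by simp
          _ ≤ ∫ x, exp (gm m x) ∂ν := integral_mono (integrable_const 1) hgme
              (fun x => by simpa using one_le_exp (hgm_nonneg m x))
      have hthree : ∫ x, exp (gm m x) ∂ν ≤ 3 := by
        have hexp_le : ∀ x, exp (gm m x) ≤ (μ.rnDeriv ν x).toReal + 2 := fun x =>
          (exp_le_exp.mpr (min_le_left _ _)).trans (my_exp_max_llr_le μ ν x)
        calc ∫ x, exp (gm m x) ∂ν ≤ ∫ x, ((μ.rnDeriv ν x).toReal + 2) ∂ν :=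
              integral_mono hgme (Measure.integrable_toReal_rnDeriv.add (integrable_const 2)) hexp_le
          _ = ∫ x, (μ.rnDeriv ν x).toReal ∂ν + 2 := by
              rw [integral_add Measure.integrable_toReal_rnDeriv (integrable_const 2)]; simp
          _ ≤ 1 + 2 := by
              rw [Measure.integral_toReal_rnDeriv hac]; simp
          _ = 3 := by norm_num
      have h1 := h (gm m) (hgm_meas m) ⟨m, hgm_bdd m⟩
      have hlog : Real.log (∫ x, exp (gm m x) ∂ν) ≤ Real.log 3 :=
        Real.log_le_log (by linarith) hthree
      linarith
    have hsup : (⨆ m : ℕ, ∫⁻ x, ENNReal.ofReal (gm m x) ∂μ) = ⊤ := by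
      rw [← lintegral_iSup (fun m => (hgm_meas m).ennreal_ofReal)
        (fun m m' hmm' x => ENNReal.ofReal_le_ofReal
          (min_le_min (le_refl _) (Nat.cast_le.mpr hmm')))]
      rw [← hpos]
      congr 1
      funext x
      apply le_antisymm
      · exact iSup_le fun m => ENNReal.ofReal_le_ofReal (min_le_left _ _)
      · have : gm (⌈max (llr μ ν x) 0⌉₊) x = max (llr μ ν x) 0 :=
          min_eq_left (Nat.le_ceil _)
        exact le_iSup_of_le ⌈max (llr μ ν x) 0⌉₊ (le_of_eq (congrArg _ this.symm))
    have hlt : ENNReal.ofReal (|K + Real.log 3| + 1) <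
        ⨆ m : ℕ, ∫⁻ x, ENNReal.ofReal (gm m x) ∂μ := by
      rw [hsup]; exact ENNReal.ofReal_lt_top
    obtain ⟨m, hm⟩ := lt_iSup_iff.mp hlt
    have hfin : ∫⁻ x, ENNReal.ofReal (gm m x) ∂μ ≠ ⊤ := by
      refine ne_top_of_le_ne_top (b := ENNReal.ofReal m) ?_ ?_
      · exact ENNReal.ofReal_ne_top
      · calc ∫⁻ x, ENNReal.ofReal (gm m x) ∂μ
            ≤ ∫⁻ _, ENNReal.ofReal m ∂μ :=
              lintegral_mono fun x => ENNReal.ofReal_le_ofReal (abs_le.mp (hgm_bdd m x)).2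
          _ = ENNReal.ofReal m := by simp
    have hgm_int_eq : ∫ x, gm m x ∂μ = (∫⁻ x, ENNReal.ofReal (gm m x) ∂μ).toReal :=
      integral_eq_lintegral_of_nonneg_ae (Filter.Eventually.of_forall (hgm_nonneg m))
        (hgm_meas m).aestronglyMeasurable
    have hbig : |K + Real.log 3| + 1 ≤ ∫ x, gm m x ∂μ := by
      rw [hgm_int_eq]
      have h2 := ENNReal.toReal_mono hfin hm.le
      rwa [ENNReal.toReal_ofReal (by positivity)] at h2
    have h3 := hb m
    have habs := le_abs_self (K + Real.log 3)
    linarith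
  -- Step (c): the value inequality
  rw [klDiv, if_pos ⟨hac, hint⟩]
  refine ENNReal.ofReal_le_ofReal ?_
  set gm : ℕ → α → ℝ := fun m x =>
    if μ.rnDeriv ν x = 0 then -(m:ℝ) else max (min (llr μ ν x) m) (-(m:ℝ)) with hgmdef
  have hrnm : Measurable (μ.rnDeriv ν) := Measure.measurable_rnDeriv μ ν
  have hgm_meas : ∀ m : ℕ, Measurable (gm m) := fun m =>
    Measurable.ite (hrnm (measurableSet_singleton 0)) measurable_const
      ((hmeas.min measurable_const).max measurable_const)
  have hgm_bdd : ∀ m x, |gm m x| ≤ (m:ℝ) := by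
    intro m x
    rw [abs_le]
    by_cases h0 : μ.rnDeriv ν x = 0
    · simp only [hgmdef, h0, if_true]
      exact ⟨le_refl _, by simpa using (neg_nonpos.mpr (Nat.cast_nonneg m)).trans (Nat.cast_nonneg m)⟩
    · simp only [hgmdef, h0, if_false]
      exact ⟨le_max_right _ _, max_le (min_le_right _ _)
        ((neg_nonpos.mpr (Nat.cast_nonneg m)).trans (Nat.cast_nonneg m))⟩
  have hgm_exp_le : ∀ m x, exp (gm m x) ≤ (μ.rnDeriv ν x).toReal + 2 := by
    intro m x
    by_cases h0 : μ.rnDeriv ν x = 0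
    · simp only [hgmdef, h0, if_true]
      calc exp (-(m:ℝ)) ≤ exp 0 := exp_le_exp.mpr (neg_nonpos.mpr (Nat.cast_nonneg m))
        _ = 1 := exp_zero
        _ ≤ _ := by simp
    · simp only [hgmdef, h0, if_false]
      refine (exp_le_exp.mpr ?_).trans (my_exp_max_llr_le μ ν x)
      exact max_le ((min_le_left _ _).trans (le_max_left _ _))
        ((neg_nonpos.mpr (Nat.cast_nonneg m)).trans (le_max_right _ _))
  have hgm_event : ∀ x, μ.rnDeriv ν x ≠ 0 →
      ∀ m : ℕ, ⌈|llr μ ν x|⌉₊ ≤ m → gm m x = llr μ ν x := by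
    intro x h0 m hm'
    have hmr : |llr μ ν x| ≤ (m:ℝ) := (Nat.le_ceil _).trans (Nat.cast_le.mpr hm')
    have e1 : min (llr μ ν x) m = llr μ ν x := min_eq_left ((le_abs_self _).trans hmr)
    have e2 : max (llr μ ν x) (-(m:ℝ)) = llr μ ν x := by
      refine max_eq_left ?_
      have := neg_abs_le (llr μ ν x)
      linarith
    simp only [hgmdef, h0, if_false, e1, e2]
  have key1 : Filter.Tendsto (fun m : ℕ => ∫ x, gm m x ∂μ) Filter.atTop
      (nhds (∫ x, llr μ ν x ∂μ)) := by
    refine tendsto_integral_of_dominated_convergence (fun x => |llr μ ν x|)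
      (fun m => (hgm_meas m).aestronglyMeasurable) hint.abs ?_ ?_
    · intro m
      filter_upwards [Measure.rnDeriv_pos hac] with x hx
      have h0 : μ.rnDeriv ν x ≠ 0 := hx.ne'
      simp only [hgmdef, h0, if_false]
      rw [Real.norm_eq_abs, abs_le]
      constructor
      · rcases le_total 0 (llr μ ν x) with ha | ha
        · have h4 : (0:ℝ) ≤ max (min (llr μ ν x) m) (-(m:ℝ)) :=
            le_max_of_le_left (le_min ha (Nat.cast_nonneg m))
          have := abs_nonneg (llr μ ν x)
          linarith
        · have h4 : llr μ ν x ≤ min (llr μ ν x) m :=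
            le_min (le_refl _) (ha.trans (Nat.cast_nonneg m))
          have h5 := h4.trans (le_max_left _ (-(m:ℝ)))
          have := neg_abs_le (llr μ ν x)
          rw [abs_of_nonpos ha]
          linarith
      · exact max_le ((min_le_left _ _).trans (le_abs_self _))
          ((neg_nonpos.mpr (Nat.cast_nonneg m)).trans (abs_nonneg _))
    · filter_upwards [Measure.rnDeriv_pos hac] with x hx
      refine Filter.Tendsto.congr' ?_ tendsto_const_nhds
      filter_upwards [Filter.eventually_ge_atTop ⌈|llr μ ν x|⌉₊] with m hm'
      exact (hgm_event x hx.ne' m hm').symm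
  have key2 : Filter.Tendsto (fun m : ℕ => ∫ x, exp (gm m x) ∂ν) Filter.atTop (nhds 1) := by
    have h1 : ∫ x, (μ.rnDeriv ν x).toReal ∂ν = 1 := by
      rw [Measure.integral_toReal_rnDeriv hac]; simp
    rw [show (1:ℝ) = ∫ x, (μ.rnDeriv ν x).toReal ∂ν from h1.symm]
    refine tendsto_integral_of_dominated_convergence (fun x => (μ.rnDeriv ν x).toReal + 2)
      (fun m => ((hgm_meas m).exp).aestronglyMeasurable)
      (Measure.integrable_toReal_rnDeriv.add (integrable_const 2)) ?_ ?_
    · intro m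
      refine Filter.Eventually.of_forall fun x => ?_
      rw [Real.norm_eq_abs, abs_of_pos (exp_pos _)]
      exact hgm_exp_le m x
    · filter_upwards [Measure.rnDeriv_lt_top μ ν] with x hx
      by_cases h0 : μ.rnDeriv ν x = 0
      · simp only [hgmdef, h0, if_true]
        rw [show ((0:ℝ≥0∞)).toReal = 0 from rfl]
        have hneg : Filter.Tendsto (fun m : ℕ => -(m:ℝ)) Filter.atTop Filter.atBot :=
          Filter.tendsto_neg_atBot_iff.mpr tendsto_natCast_atTop_atTop
        exact Real.tendsto_exp_atBot.comp hneg
      · have hpos' : 0 < (μ.rnDeriv ν x).toReal := ENNReal.toReal_pos h0 hx.ne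
        refine Filter.Tendsto.congr' ?_ tendsto_const_nhds
        filter_upwards [Filter.eventually_ge_atTop ⌈|llr μ ν x|⌉₊] with m hm'
        rw [hgm_event x h0 m hm']
        rw [show llr μ ν x = Real.log (μ.rnDeriv ν x).toReal from rfl, exp_log hpos']
  have key3 : Filter.Tendsto
      (fun m : ℕ => ∫ x, gm m x ∂μ - Real.log (∫ x, exp (gm m x) ∂ν)) Filter.atTop
      (nhds (∫ x, llr μ ν x ∂μ)) := by
    have hlog : Filter.Tendsto (fun m : ℕ => Real.log (∫ x, exp (gm m x) ∂ν)) Filter.atTop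
        (nhds 0) := by
      have := (Real.continuousAt_log (by norm_num : (1:ℝ) ≠ 0)).tendsto.comp key2
      simpa [Function.comp_def] using this
    simpa using key1.sub hlog
  refine le_of_tendsto key3 ?_
  filter_upwards with m
  exact h (gm m) (hgm_meas m) ⟨m, hgm_bdd m⟩


/-- Data processing: apply a deterministic map to independent noise (first coordinate)
plus the variable of interest (second coordinate). -/
lemma my_klDiv_map_prod_le {β γ : Type*} [MeasurableSpace β] [MeasurableSpace γ]
    (lam : Measure β) (μ ν : Measure α) [IsProbabilityMeasure μ] [IsProbabilityMeasure ν]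
    [IsProbabilityMeasure lam] {F : β × α → γ} (hF : Measurable F) :
    klDiv ((lam.prod μ).map F) ((lam.prod ν).map F) ≤ klDiv μ ν := by
  by_cases hcond : μ ≪ ν ∧ Integrable (llr μ ν) μ
  swap
  · have ht : klDiv μ ν = ⊤ := by rw [klDiv, if_neg hcond]
    rw [ht]; exact le_top
  obtain ⟨hac, hint⟩ := hcond
  haveI h1 : IsProbabilityMeasure ((lam.prod μ).map F) :=
    Measure.isProbabilityMeasure_map hF.aemeasurable
  haveI h2 : IsProbabilityMeasure ((lam.prod ν).map F) :=
    Measure.isProbabilityMeasure_map hF.aemeasurable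
  have hmain : klDiv ((lam.prod μ).map F) ((lam.prod ν).map F) ≤
      ENNReal.ofReal (∫ x, llr μ ν x ∂μ) := by
    refine my_klDiv_le_of_forall_bounded ?_
    rintro g hg ⟨C, hC⟩
    have hgF : Measurable (fun p : β × α => g (F p)) := hg.comp hF
    set h' : α → ℝ := fun x => ∫ w, g (F (w, x)) ∂lam with hh'def
    have hh'sm : StronglyMeasurable h' := hgF.stronglyMeasurable.integral_prod_left'
    have hinner_sm : StronglyMeasurable (fun x => ∫ w, exp (g (F (w, x))) ∂lam) :=
      (hgF.exp).stronglyMeasurable.integral_prod_left'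
    have hbint : ∀ x : α, Integrable (fun w => g (F (w, x))) lam := fun x =>
      my_integrable_of_bounded (hgF.comp measurable_prodMk_right).aestronglyMeasurable
        (fun w => hC _)
    have hbexpint : ∀ x : α, Integrable (fun w => exp (g (F (w, x)))) lam := fun x =>
      my_integrable_of_bounded ((hgF.comp measurable_prodMk_right).exp).aestronglyMeasurable
        (C := exp C) (fun w => by
          rw [abs_of_pos (exp_pos _)]; exact exp_le_exp.mpr (abs_le.mp (hC _)).2)
    have hh'b : ∀ x, |h' x| ≤ C := by
      intro x
      calc |h' x| ≤ ∫ w, |g (F (w, x))| ∂lam := by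
            simpa [Real.norm_eq_abs] using norm_integral_le_integral_norm (fun w => g (F (w, x))) (μ := lam)
        _ ≤ ∫ _, C ∂lam := integral_mono (hbint x).abs (integrable_const C) (fun w => hC _)
        _ = C := by simp
    -- identify the two integrals
    have hgprodint : Integrable (fun p : β × α => g (F p)) (lam.prod μ) :=
      my_integrable_of_bounded hgF.aestronglyMeasurable (fun p => hC _)
    have hgprodintν : Integrable (fun p : β × α => g (F p)) (lam.prod ν) :=
      my_integrable_of_bounded hgF.aestronglyMeasurable (fun p => hC _)
    have hgexpprodintν : Integrable (fun p : β × α => exp (g (F p))) (lam.prod ν) :=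
      my_integrable_of_bounded (hgF.exp).aestronglyMeasurable (C := exp C) (fun p => by
        rw [abs_of_pos (exp_pos _)]; exact exp_le_exp.mpr (abs_le.mp (hC _)).2)
    have e1 : ∫ y, g y ∂((lam.prod μ).map F) = ∫ x, h' x ∂μ := by
      rw [integral_map hF.aemeasurable hg.aestronglyMeasurable]
      exact integral_prod_symm _ hgprodint
    have e2 : ∫ y, exp (g y) ∂((lam.prod ν).map F)
        = ∫ x, (∫ w, exp (g (F (w, x))) ∂lam) ∂ν := by
      rw [integral_map hF.aemeasurable (hg.exp).aestronglyMeasurable]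
      exact integral_prod_symm _ hgexpprodintν
    -- Jensen pointwise
    have hjensen : ∀ x, exp (h' x) ≤ ∫ w, exp (g (F (w, x))) ∂lam := fun x =>
      my_exp_integral_le (hbint x) (hbexpint x)
    have hh'int : Integrable (fun x => exp (h' x)) ν :=
      my_integrable_of_bounded ((hh'sm.measurable).exp).aestronglyMeasurable (C := exp C)
        (fun x => by rw [abs_of_pos (exp_pos _)]; exact exp_le_exp.mpr (abs_le.mp (hh'b x)).2)
    have hinner_int : Integrable (fun x => ∫ w, exp (g (F (w, x))) ∂lam) ν := by
      refine my_integrable_of_bounded hinner_sm.aestronglyMeasurable (C := exp C) fun x => ?_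
      rw [abs_of_nonneg (integral_nonneg fun w => (exp_pos _).le)]
      calc ∫ w, exp (g (F (w, x))) ∂lam ≤ ∫ _, exp C ∂lam :=
            integral_mono (hbexpint x) (integrable_const _)
              (fun w => exp_le_exp.mpr (abs_le.mp (hC _)).2)
        _ = exp C := by simp
    have e3 : ∫ x, exp (h' x) ∂ν ≤ ∫ x, (∫ w, exp (g (F (w, x))) ∂lam) ∂ν :=
      integral_mono hh'int hinner_int hjensen
    have hpos : 0 < ∫ x, exp (h' x) ∂ν := by
      have : (0:ℝ) < exp (-C) := exp_pos _
      calc (0:ℝ) < exp (-C) := this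
        _ = ∫ _, exp (-C) ∂ν := by simp
        _ ≤ ∫ x, exp (h' x) ∂ν := integral_mono (integrable_const _) hh'int
            (fun x => exp_le_exp.mpr (by have := (abs_le.mp (hh'b x)).1; linarith))
    have hlog : Real.log (∫ x, exp (h' x) ∂ν) ≤ Real.log (∫ y, exp (g y) ∂((lam.prod ν).map F)) := by
      rw [e2]; exact Real.log_le_log hpos e3
    have hdv := my_dv_upper hac hint (hh'sm.measurable) hh'b
    rw [e1]
    linarith
  refine hmain.trans ?_
  rw [klDiv, if_pos ⟨hac, hint⟩]


end Analytic

section Structural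
variable {Ω : Type*} [MeasurableSpace Ω]

lemma my_map_eq_pi {ι : Type*} [Fintype ι] {μ : Measure Ω} [IsProbabilityMeasure μ]
    {β : ι → Type*} {m : ∀ i, MeasurableSpace (β i)}
    {f : ∀ i, Ω → β i} (hm : ∀ i, Measurable (f i)) (h : iIndepFun (m := m) f μ) :
    μ.map (fun ω i => f i ω) = Measure.pi (fun i => μ.map (f i)) := by
  haveI : ∀ i, IsProbabilityMeasure (μ.map (f i)) :=
    fun i => Measure.isProbabilityMeasure_map (hm i).aemeasurable
  refine (Measure.pi_eq fun s hs => ?_).symm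
  rw [Measure.map_apply (measurable_pi_lambda _ hm) (MeasurableSet.univ_pi hs)]
  have hpre : (fun ω i => f i ω) ⁻¹' (Set.univ.pi s) = ⋂ i, f i ⁻¹' s i := by
    ext ω; simp [Set.mem_pi]
  rw [hpre, h.meas_iInter (fun i => ⟨s i, hs i, rfl⟩)]
  exact Finset.prod_congr rfl fun i _ => (Measure.map_apply (hm i) (hs i)).symm

lemma my_pi_map_coord {ι : Type*} [Fintype ι] {β γ : ι → Type*}
    [∀ i, MeasurableSpace (β i)] [∀ i, MeasurableSpace (γ i)]
    (m : ∀ i, Measure (β i)) [∀ i, IsProbabilityMeasure (m i)]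
    {h : ∀ i, β i → γ i} (hh : ∀ i, Measurable (h i)) :
    (Measure.pi m).map (fun v i => h i (v i)) = Measure.pi (fun i => (m i).map (h i)) := by
  haveI : ∀ i, IsProbabilityMeasure ((m i).map (h i)) :=
    fun i => Measure.isProbabilityMeasure_map (hh i).aemeasurable
  refine (Measure.pi_eq fun s hs => ?_).symm
  rw [Measure.map_apply (show Measurable (fun (v : ∀ i, β i) i => h i (v i)) from
    measurable_pi_lambda _ fun i => (hh i).comp (measurable_pi_apply i))
    (MeasurableSet.univ_pi hs)]
  have hpre : (fun v i => h i (v i)) ⁻¹' (Set.univ.pi s) = Set.univ.pi fun i => h i ⁻¹' s i := by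
    ext v; simp [Set.mem_pi]
  rw [hpre, Measure.pi_pi]
  exact Finset.prod_congr rfl fun i _ => (Measure.map_apply (hh i) (hs i)).symm

lemma my_pi_map_eval {ι : Type*} [Fintype ι] [DecidableEq ι] {β : ι → Type*}
    [∀ i, MeasurableSpace (β i)]
    (m : ∀ i, Measure (β i)) [∀ i, IsProbabilityMeasure (m i)] (i : ι) :
    (Measure.pi m).map (fun v => v i) = m i := by
  ext s hs
  rw [Measure.map_apply (measurable_pi_apply i) hs]
  have hpre : (fun v : ∀ j, β j => v i) ⁻¹' s
      = Set.univ.pi (Function.update (fun j => (Set.univ : Set (β j))) i s) := by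
    ext v
    simp only [Set.mem_preimage, Set.mem_pi, Set.mem_univ, forall_true_left]
    constructor
    · intro hv j
      by_cases hj : j = i
      · subst hj; rwa [Function.update_self]
      · rw [Function.update_of_ne hj]; exact Set.mem_univ _
    · intro hv
      have := hv i
      rwa [Function.update_self] at this
  rw [hpre, Measure.pi_pi]
  rw [Finset.prod_eq_single i (fun j _ hj => by rw [Function.update_of_ne hj]; simp)
    (fun hni => absurd (Finset.mem_univ i) hni)]
  rw [Function.update_self]

end Structural

/-- If `Y_i = E_i X_i + (1 - E_i) Z_i` with Bernoulli `E_i`, and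
`E_1, …, E_n, Z_1, …, Z_n` and `X = (X_1, …, X_n)` are mutually independent, then
`K(L(Y) ‖ L(Y_1) ⊗ ⋯ ⊗ L(Y_n)) ≤ K(L(X) ‖ L(X_1) ⊗ ⋯ ⊗ L(X_n))`. -/
theorem klDiv_contaminated_le
    {Ω : Type*} [MeasurableSpace Ω] (μ : Measure Ω) [IsProbabilityMeasure μ]
    (n : ℕ) (X Z E : Fin n → Ω → ℝ)
    (hX : ∀ i, Measurable (X i)) (hZ : ∀ i, Measurable (Z i)) (hE : ∀ i, Measurable (E i))
    (hBern : ∀ i ω, E i ω = 0 ∨ E i ω = 1)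
    (Y : Fin n → Ω → ℝ) (hY : ∀ i ω, Y i ω = E i ω * X i ω + (1 - E i ω) * Z i ω)
    (hindep : iIndepFun (m := fun k => contTypeMeasurableSpace n k)
      (fun k => match k with
        | .inl (.inl j) => E j
        | .inl (.inr j) => Z j
        | .inr _ => fun ω => fun i : Fin n => X i ω) μ) :
    klDiv (μ.map (fun ω => fun i : Fin n => Y i ω)) (Measure.pi (fun i => μ.map (Y i))) ≤
      klDiv (μ.map (fun ω => fun i : Fin n => X i ω)) (Measure.pi (fun i => μ.map (X i))) := by
  classical
  set f : ∀ k : (Fin n ⊕ Fin n) ⊕ Unit, Ω → contType n k := fun k => match k with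
    | .inl (.inl j) => E j
    | .inl (.inr j) => Z j
    | .inr _ => fun ω => fun i : Fin n => X i ω with hfdef
  have hf_meas : ∀ k, Measurable (f k) := by
    rintro ((j | j) | u)
    · exact hE j
    · exact hZ j
    · exact measurable_pi_lambda _ hX
  haveI hprob : ∀ k, IsProbabilityMeasure (μ.map (f k)) :=
    fun k => Measure.isProbabilityMeasure_map (hf_meas k).aemeasurable
  -- abbreviations
  set A := (Fin n → ℝ)
  have hmaster0 : μ.map (fun ω k => f k ω) = Measure.pi (fun k => μ.map (f k)) :=
    my_map_eq_pi hf_meas hindep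
  -- measure-preserving reshaping
  have h1 := measurePreserving_sumPiEquivProdPi (μ := fun k : (Fin n ⊕ Fin n) ⊕ Unit => μ.map (f k))
  have h2 := measurePreserving_sumPiEquivProdPi (μ := fun k : Fin n ⊕ Fin n => μ.map (f (.inl k)))
  have h3 := measurePreserving_piUnique (μ := fun u : Unit => μ.map (f (.inr u)))
  have hΨ := (h2.prod h3).comp h1
  -- the big map identity
  have hmaster : μ.map (fun ω => (((fun i => E i ω, fun i => Z i ω) : A × A),
        (fun i => X i ω : A)))
      = ((Measure.pi (fun j => μ.map (E j))).prod (Measure.pi (fun j => μ.map (Z j)))).prod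
          (μ.map (fun ω => fun i : Fin n => X i ω)) := by
    have hmeq := hΨ.map_eq
    rw [← hmaster0] at hmeq
    rw [Measure.map_map hΨ.measurable (measurable_pi_lambda _ hf_meas)] at hmeq
    exact hmeq
  -- abbreviations and instances
  haveI hbEp : ∀ j, IsProbabilityMeasure (μ.map (E j)) :=
    fun j => Measure.isProbabilityMeasure_map (hE j).aemeasurable
  haveI hcZp : ∀ j, IsProbabilityMeasure (μ.map (Z j)) :=
    fun j => Measure.isProbabilityMeasure_map (hZ j).aemeasurable
  haveI haXp : ∀ j, IsProbabilityMeasure (μ.map (X j)) :=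
    fun j => Measure.isProbabilityMeasure_map (hX j).aemeasurable
  have hYm : ∀ j, Measurable (Y j) := by
    intro j
    have : Y j = fun ω => E j ω * X j ω + (1 - E j ω) * Z j ω := funext (hY j)
    rw [this]
    exact ((hE j).mul (hX j)).add ((measurable_const.sub (hE j)).mul (hZ j))
  haveI hYp : ∀ j, IsProbabilityMeasure (μ.map (Y j)) :=
    fun j => Measure.isProbabilityMeasure_map (hYm j).aemeasurable
  set μX : Measure A := μ.map (fun ω => fun i : Fin n => X i ω) with hμX
  haveI : IsProbabilityMeasure μX :=
    Measure.isProbabilityMeasure_map (measurable_pi_lambda _ hX).aemeasurable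
  set lamW : Measure (A × A) :=
    (Measure.pi (fun j => μ.map (E j))).prod (Measure.pi (fun j => μ.map (Z j))) with hlamW
  set T : (A × A) × A → A := fun p => fun i => p.1.1 i * p.2 i + (1 - p.1.1 i) * p.1.2 i with hT
  have hTm : Measurable T := by
    refine measurable_pi_lambda _ fun i => ?_
    have h1 : Measurable fun p : (A × A) × A => p.1.1 i :=
      (measurable_pi_apply i).comp (measurable_fst.comp measurable_fst)
    have h2 : Measurable fun p : (A × A) × A => p.1.2 i :=
      (measurable_pi_apply i).comp (measurable_snd.comp measurable_fst)
    have h3 : Measurable fun p : (A × A) × A => p.2 i :=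
      (measurable_pi_apply i).comp measurable_snd
    exact (h1.mul h3).add ((measurable_const.sub h1).mul h2)
  set q : (ℝ × ℝ) × ℝ → ℝ := fun p => p.1.1 * p.2 + (1 - p.1.1) * p.1.2 with hq
  have hqm : Measurable q := by
    have h1 : Measurable fun p : (ℝ × ℝ) × ℝ => p.1.1 := measurable_fst.comp measurable_fst
    have h2 : Measurable fun p : (ℝ × ℝ) × ℝ => p.1.2 := measurable_snd.comp measurable_fst
    have h3 : Measurable fun p : (ℝ × ℝ) × ℝ => p.2 := measurable_snd
    exact (h1.mul h3).add ((measurable_const.sub h1).mul h2)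
  have hbig_meas : Measurable (fun ω => (((fun i => E i ω, fun i => Z i ω) : A × A),
      (fun i => X i ω : A))) :=
    ((measurable_pi_lambda _ hE).prodMk (measurable_pi_lambda _ hZ)).prodMk
      (measurable_pi_lambda _ hX)
  -- Fact A
  have hfactA : μ.map (fun ω => fun i : Fin n => Y i ω) = (lamW.prod μX).map T := by
    rw [hlamW, hμX, ← hmaster, Measure.map_map hTm hbig_meas]
    congr 1
    funext ω
    funext i
    exact hY i ω
  -- per-coordinate master
  have hcoord : ∀ i : Fin n, μ.map (fun ω => (((E i ω, Z i ω) : ℝ × ℝ), X i ω))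
      = ((μ.map (E i)).prod (μ.map (Z i))).prod (μ.map (X i)) := by
    intro i
    have hgi : Measurable (fun p : (A × A) × A => (((p.1.1 i, p.1.2 i) : ℝ × ℝ), p.2 i)) := by
      have h1 : Measurable fun p : (A × A) × A => p.1.1 i :=
        (measurable_pi_apply i).comp (measurable_fst.comp measurable_fst)
      have h2 : Measurable fun p : (A × A) × A => p.1.2 i :=
        (measurable_pi_apply i).comp (measurable_snd.comp measurable_fst)
      have h3 : Measurable fun p : (A × A) × A => p.2 i :=
        (measurable_pi_apply i).comp measurable_snd
      exact (h1.prodMk h2).prodMk h3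
    have e0 : μ.map (fun ω => (((E i ω, Z i ω) : ℝ × ℝ), X i ω))
        = (lamW.prod μX).map (fun p => ((p.1.1 i, p.1.2 i), p.2 i)) := by
      rw [hlamW, hμX, ← hmaster, Measure.map_map hgi hbig_meas]
      rfl
    rw [e0]
    have e1 : (lamW.prod μX).map
        (Prod.map (Prod.map (fun v : A => v i) (fun v : A => v i)) (fun v : A => v i))
        = (lamW.map (Prod.map (fun v : A => v i) (fun v : A => v i))).prod
            (μX.map (fun v : A => v i)) :=
      (Measure.map_prod_map _ _
        ((measurable_pi_apply i).prodMap (measurable_pi_apply i)) (measurable_pi_apply i)).symm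
    have e2 : lamW.map (Prod.map (fun v : A => v i) (fun v : A => v i))
        = (μ.map (E i)).prod (μ.map (Z i)) := by
      rw [hlamW, ← Measure.map_prod_map _ _ (measurable_pi_apply i) (measurable_pi_apply i),
        my_pi_map_eval, my_pi_map_eval]
    have e3 : μX.map (fun v : A => v i) = μ.map (X i) := by
      rw [hμX, Measure.map_map (measurable_pi_apply i) (measurable_pi_lambda _ hX)]
      rfl
    calc (lamW.prod μX).map (fun p => ((p.1.1 i, p.1.2 i), p.2 i))
        = (lamW.prod μX).map
            (Prod.map (Prod.map (fun v : A => v i) (fun v : A => v i)) (fun v : A => v i)) := rfl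
      _ = _ := by rw [e1, e2, e3]
  -- Fact C
  set Φ₁ := MeasurableEquiv.arrowProdEquivProdArrow ℝ ℝ (Fin n) with hΦ₁
  set Φ₂ := MeasurableEquiv.arrowProdEquivProdArrow (ℝ × ℝ) ℝ (Fin n) with hΦ₂
  have harr1 := (measurePreserving_arrowProdEquivProdArrow ℝ ℝ (Fin n)
      (fun j => μ.map (E j)) (fun j => μ.map (Z j))).map_eq
  have harr2 := (measurePreserving_arrowProdEquivProdArrow (ℝ × ℝ) ℝ (Fin n)
      (fun j => (μ.map (E j)).prod (μ.map (Z j))) (fun j => μ.map (X j))).map_eq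
  have hρmapq : ∀ i : Fin n,
      ((((μ.map (E i)).prod (μ.map (Z i))).prod (μ.map (X i))).map q) = μ.map (Y i) := by
    intro i
    have hpm : Measurable (fun ω => (((E i ω, Z i ω) : ℝ × ℝ), X i ω)) :=
      ((hE i).prodMk (hZ i)).prodMk (hX i)
    rw [← hcoord i, Measure.map_map hqm hpm]
    congr 1
    funext ω
    exact (hY i ω).symm
  have hfactC : Measure.pi (fun i => μ.map (Y i))
      = (lamW.prod (Measure.pi fun j => μ.map (X j))).map T := by
    have c1 : Measure.pi (fun i => μ.map (Y i))
        = Measure.pi (fun i => (((μ.map (E i)).prod (μ.map (Z i))).prod (μ.map (X i))).map q) := by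
      congr 1
      funext i
      rw [hρmapq i]
    rw [c1, ← my_pi_map_coord _ (fun i => hqm)]
    have s2 : ((Measure.pi fun i => (μ.map (E i)).prod (μ.map (Z i))).prod
          (Measure.pi fun j => μ.map (X j))).map (Prod.map Φ₁ id)
        = lamW.prod (Measure.pi fun j => μ.map (X j)) := by
      rw [← Measure.map_prod_map _ _ Φ₁.measurable measurable_id, harr1, Measure.map_id, hlamW]
    rw [← s2, ← harr2,
      Measure.map_map (Φ₁.measurable.prodMap measurable_id) Φ₂.measurable,
      Measure.map_map hTm ((Φ₁.measurable.prodMap measurable_id).comp Φ₂.measurable)]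
    rfl
  -- conclude
  haveI : IsProbabilityMeasure lamW := by
    rw [hlamW]; infer_instance
  haveI : IsProbabilityMeasure (Measure.pi fun j => μ.map (X j)) := by infer_instance
  rw [hfactA, hfactC]
  exact my_klDiv_map_prod_le lamW μX (Measure.pi fun j => μ.map (X j)) hTm
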